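/- Let K₁ and K₂ be (G,P)-graphs for a group G hyperbolic relative to P, and let H ≤ G. If there exists a nonempty connected quasi-isometrically embedded H-invariant subgraph of K₁ with finitely many H-orbits of edges, then such a subgraph also exists in K₂. That is, relative quasiconvexity (Definition Q-0) is independent of the choice of (G,P)-graph. -/

import Mathlib

open SimpleGraph

universe u v

variable {V : Type u} {G : Type v}

/-- A graph is fine if each edge lies in only finitely many circuits (embedded
cycles) of length `n`, for every `n`. -/
def Fine (K : SimpleGraph V) : Prop :=
  ∀ (n : ℕ) (u w : V), K.Adj u w →
    {c : K.Walk u u | c.IsCycle ∧ c.length = n ∧ s(u, w) ∈ c.edges}.Finite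

/-- An action of `G` by permutations of `V` preserves the graph `K`. -/
def ActsOn [Group G] (φ : G →* Equiv.Perm V) (K : SimpleGraph V) : Prop :=
  ∀ (g : G) (u w : V), K.Adj u w → K.Adj (φ g u) (φ g w)

/-- The stabilizer of a vertex. -/
def stab [Group G] (φ : G →* Equiv.Perm V) (x : V) : Subgroup G where
  carrier := {g | φ g x = x}
  one_mem' := by simp
  mul_mem' := by
    intro a b ha hb
    simp only [Set.mem_setOf_eq, map_mul, Equiv.Perm.mul_apply] at *
    rw [hb, ha]
  inv_mem' := by
    intro a ha
    simp only [Set.mem_setOf_eq, map_inv] at *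
    conv_lhs => rw [← ha]
    simp

/-- The conjugate subgroup `g P g⁻¹`. -/
def conjSub [Group G] (g : G) (P : Subgroup G) : Subgroup G :=
  Subgroup.map (MulAut.conj g).toMonoidHom P

/-- All edge stabilizers are finite (we use pointwise stabilizers of the two
endpoints; the actions considered are without inversions). -/
def FiniteEdgeStabs [Group G] (φ : G →* Equiv.Perm V) (K : SimpleGraph V) : Prop :=
  ∀ u w : V, K.Adj u w → ((stab φ u ⊓ stab φ w : Subgroup G) : Set G).Finite

/-- There are finitely many `G`-orbits of edges. -/
def FinEdgeOrbits [Group G] (φ : G →* Equiv.Perm V) (K : SimpleGraph V) : Prop :=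
  ∃ F : Set (V × V), F.Finite ∧
    ∀ u w : V, K.Adj u w → ∃ g : G, ∃ p ∈ F, φ g p.1 = u ∧ φ g p.2 = w

/-- Gromov hyperbolicity of the path metric of a graph (four point condition). -/
def Hyperbolic (K : SimpleGraph V) : Prop :=
  ∃ δ : ℝ, ∀ x y z t : V,
    (K.dist x y : ℝ) + (K.dist z t : ℝ) ≤
      max ((K.dist x z : ℝ) + (K.dist y t : ℝ)) ((K.dist x t : ℝ) + (K.dist y z : ℝ)) + δ

/-- `K` is a `(G, P)`-graph witnessing that `G` is hyperbolic relative to the finite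
collection `Ps` of subgroups: `K` is a connected fine hyperbolic graph, `G` acts
on it without inversions with finite edge stabilizers and finitely many orbits of
edges, and `Ps` is a set of representatives of the distinct conjugacy classes of
vertex stabilizers, with every infinite vertex stabilizer represented. -/
structure IsGPGraph [Group G] (φ : G →* Equiv.Perm V) (Ps : Set (Subgroup G))
    (K : SimpleGraph V) : Prop where
  finP : Ps.Finite
  conn : K.Connected
  fine : Fine K
  hyp : Hyperbolic K
  acts : ActsOn φ K
  noInv : ∀ (g : G) (u w : V), K.Adj u w → φ g u = w → φ g w ≠ u
  finStabs : FiniteEdgeStabs φ K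
  finOrbits : FinEdgeOrbits φ K
  parab : ∀ x : V, ¬ ((stab φ x : Set G)).Finite →
    ∃ P ∈ Ps, ∃ g : G, stab φ x = conjSub g P
  reps : ∀ P ∈ Ps, ∃ x : V, stab φ x = P
  distinct : ∀ P ∈ Ps, ∀ Q ∈ Ps, (∃ g : G, conjSub g P = Q) → P = Q

/-- Definition (Q-0): `H` is relatively quasiconvex with respect to the
`(G,Ps)`-graph `K` if there is a nonempty connected `H`-invariant subgraph `L`
of `K`, quasi-isometrically embedded in the path metric, with finitely many
`H`-orbits of edges. -/
def QC0 [Group G] (φ : G →* Equiv.Perm V) (K : SimpleGraph V)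
    (H : Subgroup G) : Prop :=
  ∃ L : K.Subgraph, L.verts.Nonempty ∧ L.coe.Connected ∧
    (∀ g ∈ H, (∀ x ∈ L.verts, φ g x ∈ L.verts) ∧
      ∀ u w : V, L.Adj u w → L.Adj (φ g u) (φ g w)) ∧
    (∃ F : Set (V × V), F.Finite ∧
      ∀ u w : V, L.Adj u w → ∃ g ∈ H, ∃ p ∈ F, φ g p.1 = u ∧ φ g p.2 = w) ∧
    (∃ l e : ℝ, 1 ≤ l ∧ 0 ≤ e ∧ ∀ u w : L.verts,
      (K.dist u.1 w.1 : ℝ) ≤ l * (L.coe.dist u w : ℝ) + e ∧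
      (L.coe.dist u w : ℝ) ≤ l * (K.dist u.1 w.1 : ℝ) + e)

lemma mem_stab_iff [Group G] (φ : G →* Equiv.Perm V) (x : V) (g : G) :
    g ∈ stab φ x ↔ φ g x = x := Iff.rfl

/-- The graph homomorphism induced by the action of `g`. -/
def actHom [Group G] {φ : G →* Equiv.Perm V} {K : SimpleGraph V}
    (h : ActsOn φ K) (g : G) : K →g K := ⟨φ g, fun hadj => h g _ _ hadj⟩

lemma act_apply_inv [Group G] (φ : G →* Equiv.Perm V) (g : G) (x : V) :
    φ g (φ g⁻¹ x) = x := by simp [map_inv]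

lemma act_inv_apply [Group G] (φ : G →* Equiv.Perm V) (g : G) (x : V) :
    φ g⁻¹ (φ g x) = x := by simp [map_inv]

lemma act_mul_apply [Group G] (φ : G →* Equiv.Perm V) (g h : G) (x : V) :
    φ (g * h) x = φ g (φ h x) := by simp [map_mul]

lemma dist_le_of_walk_hom {W : Type*} {V : Type*} {A : SimpleGraph V} {B : SimpleGraph W}
    (f : A →g B) {a b : V} (p : A.Walk a b) : B.dist (f a) (f b) ≤ p.length := by
  have := SimpleGraph.dist_le (p.map f)
  simpa using this

lemma act_dist_le [Group G] {φ : G →* Equiv.Perm V} {K : SimpleGraph V}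
    (hacts : ActsOn φ K) (hconn : K.Connected) (g : G) (a b : V) :
    K.dist (φ g a) (φ g b) ≤ K.dist a b := by
  obtain ⟨p, hp⟩ := hconn.exists_walk_length_eq_dist a b
  have := dist_le_of_walk_hom (actHom hacts g) p
  simpa [actHom, hp] using this

lemma act_dist_eq [Group G] {φ : G →* Equiv.Perm V} {K : SimpleGraph V}
    (hacts : ActsOn φ K) (hconn : K.Connected) (g : G) (a b : V) :
    K.dist (φ g a) (φ g b) = K.dist a b := by
  refine le_antisymm (act_dist_le hacts hconn g a b) ?_
  have := act_dist_le hacts hconn g⁻¹ (φ g a) (φ g b)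
  simpa [act_inv_apply] using this

lemma nat_bdd_of_finite {s : Set ℕ} (hs : s.Finite) : ∃ B : ℕ, ∀ n ∈ s, n ≤ B := by
  obtain ⟨B, hB⟩ := hs.bddAbove
  exact ⟨B, fun n hn => hB hn⟩

lemma actHom_apply [Group G] {φ : G →* Equiv.Perm V} {K : SimpleGraph V}
    (h : ActsOn φ K) (g : G) (x : V) : actHom h g x = φ g x := rfl

/-- Transfer a walk of the ambient graph whose edges all lie in a subgraph to a
walk of the subgraph coercion. -/
lemma walk_transfer_subgraph {K : SimpleGraph V} (L : K.Subgraph) :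
    ∀ {a b : V} (q : K.Walk a b), (∀ x y, s(x, y) ∈ q.edges → L.Adj x y) →
      ∀ (ha : a ∈ L.verts) (hb : b ∈ L.verts),
      ∃ q' : L.coe.Walk ⟨a, ha⟩ ⟨b, hb⟩, q'.length = q.length := by
  intro a b q
  induction q with
  | nil =>
    intro _ ha hb
    exact ⟨SimpleGraph.Walk.nil, rfl⟩
  | @cons a c b hadj q ih =>
    intro hq ha hb
    have hac : L.Adj a c := hq a c (by simp)
    have hc : c ∈ L.verts := L.edge_vert hac.symm
    obtain ⟨q', hq'⟩ := ih (fun x y hxy => hq x y (by simp [hxy])) hc hb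
    exact ⟨SimpleGraph.Walk.cons (by exact hac) q', congrArg (· + 1) hq'⟩

/-- Key comparison lemma: a coarsely Lipschitz, coarsely equivariant map from
`K₂` to `K₁`. -/
lemma exists_psi {V₁ : Type u} {V₂ : Type*} [Group G]
    (φ₁ : G →* Equiv.Perm V₁) (φ₂ : G →* Equiv.Perm V₂)
    (Ps : Set (Subgroup G)) (K₁ : SimpleGraph V₁) (K₂ : SimpleGraph V₂)
    (hK₁ : IsGPGraph φ₁ Ps K₁) (hK₂ : IsGPGraph φ₂ Ps K₂) :
    ∃ (ψ : V₂ → V₁) (C : ℕ),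
      (∀ ξ η : V₂, K₁.dist (ψ ξ) (ψ η) ≤ C * K₂.dist ξ η) ∧
      (∀ (ζ : V₂) (v : V₁), ∃ C' : ℕ, ∀ h : G,
        K₁.dist (ψ (φ₂ h ζ)) (φ₁ h v) ≤ C') := by
  classical
  have hne₁ : Nonempty V₁ := hK₁.conn.nonempty
  -- canonical orbit representatives in V₂
  let s : Setoid V₂ := ⟨fun a b => ∃ g : G, φ₂ g b = a, by
    constructor
    · intro a; exact ⟨1, by simp⟩
    · rintro a b ⟨g, rfl⟩; exact ⟨g⁻¹, by simp [act_inv_apply]⟩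
    · rintro a b c ⟨g, rfl⟩ ⟨k, rfl⟩; exact ⟨g * k, by simp [act_mul_apply]⟩⟩
  let z : V₂ → V₂ := fun ξ => (Quotient.mk s ξ).out
  have hz_orbit : ∀ ξ : V₂, ∃ g : G, φ₂ g (z ξ) = ξ := by
    intro ξ
    have : (Quotient.mk s (z ξ)) = Quotient.mk s ξ := Quotient.out_eq _
    have h2 : s.r (z ξ) ξ := Quotient.exact this
    obtain ⟨g, hg⟩ := h2
    exact ⟨g⁻¹, by rw [← hg, act_inv_apply]⟩
  have hz_eq : ∀ ξ η : V₂, (∃ g : G, φ₂ g η = ξ) → z ξ = z η := by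
    intro ξ η hrel
    have : (Quotient.mk s ξ) = Quotient.mk s η := Quotient.sound hrel
    simp only [z, this]
  -- choice of target points with bounded distortion of stabilizers
  have hxD : ∀ ζ : V₂, ∃ (x : V₁) (D : ℕ), ∀ t : G, φ₂ t ζ = ζ →
      K₁.dist (φ₁ t x) x ≤ D := by
    intro ζ
    by_cases hfin : ((stab φ₂ ζ : Set G)).Finite
    · obtain ⟨x⟩ := hne₁
      have himg : ((fun t : G => K₁.dist (φ₁ t x) x) '' (stab φ₂ ζ : Set G)).Finite :=
        hfin.image _
      obtain ⟨D, hD⟩ := nat_bdd_of_finite himg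
      exact ⟨x, D, fun t ht => hD _ ⟨t, ht, rfl⟩⟩
    · obtain ⟨P, hP, g, hg⟩ := hK₂.parab ζ hfin
      obtain ⟨xP, hxP⟩ := hK₁.reps P hP
      refine ⟨φ₁ g xP, 0, fun t ht => ?_⟩
      have htmem : t ∈ conjSub g P := by rw [← hg]; exact ht
      obtain ⟨q, hq, hqt⟩ := htmem
      have hqx : φ₁ q xP = xP := by rw [← hxP] at hq; exact hq
      have : φ₁ t (φ₁ g xP) = φ₁ g xP := by
        have hqt' : (g * q * g⁻¹ : G) = t := hqt
        rw [← hqt', ← act_mul_apply]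
        rw [show g * q * g⁻¹ * g = g * q by group, act_mul_apply, hqx]
      rw [this, SimpleGraph.dist_self]
  choose xch Dch hDch using hxD
  choose gch hgch using hz_orbit
  set ψ : V₂ → V₁ := fun ξ => φ₁ (gch ξ) (xch (z ξ)) with hψ
  -- the coset lemma
  have coset : ∀ (ζ : V₂) (k k' : G), φ₂ k ζ = φ₂ k' ζ →
      K₁.dist (φ₁ k (xch ζ)) (φ₁ k' (xch ζ)) ≤ Dch ζ := by
    intro ζ k k' hkk
    have ht : φ₂ (k'⁻¹ * k) ζ = ζ := by rw [act_mul_apply, hkk, act_inv_apply]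
    have := hDch ζ (k'⁻¹ * k) ht
    calc K₁.dist (φ₁ k (xch ζ)) (φ₁ k' (xch ζ))
        = K₁.dist (φ₁ k'⁻¹ (φ₁ k (xch ζ))) (φ₁ k'⁻¹ (φ₁ k' (xch ζ))) :=
          (act_dist_eq hK₁.acts hK₁.conn k'⁻¹ _ _).symm
      _ = K₁.dist (φ₁ (k'⁻¹ * k) (xch ζ)) (xch ζ) := by
          rw [← act_mul_apply, ← act_mul_apply]; simp
      _ ≤ Dch ζ := this
  -- bound along one edge of K₂
  obtain ⟨F₂, hF₂fin, hF₂⟩ := hK₂.finOrbits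
  have hEfin : ((fun p : V₂ × V₂ =>
      Dch (z p.1) + K₁.dist (ψ p.1) (ψ p.2) + Dch (z p.2)) '' F₂).Finite :=
    hF₂fin.image _
  obtain ⟨C, hC⟩ := nat_bdd_of_finite hEfin
  have hedge : ∀ ξ η : V₂, K₂.Adj ξ η → K₁.dist (ψ ξ) (ψ η) ≤ C := by
    intro ξ η hadj
    obtain ⟨g, p, hpF, hp1, hp2⟩ := hF₂ ξ η hadj
    have hz1 : z ξ = z p.1 := hz_eq ξ p.1 ⟨g, hp1⟩
    have hz2 : z η = z p.2 := hz_eq η p.2 ⟨g, hp2⟩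
    -- first leg
    have hleg1 : K₁.dist (ψ ξ) (φ₁ (g * gch p.1) (xch (z p.1))) ≤ Dch (z p.1) := by
      have h1 : φ₂ (gch ξ) (z p.1) = φ₂ (g * gch p.1) (z p.1) := by
        rw [act_mul_apply, hgch p.1, hp1, ← hz1]; exact hgch ξ
      have := coset (z p.1) (gch ξ) (g * gch p.1) h1
      simpa [hψ, hz1] using this
    have hleg3 : K₁.dist (φ₁ (g * gch p.2) (xch (z p.2))) (ψ η) ≤ Dch (z p.2) := by
      have h1 : φ₂ (gch η) (z p.2) = φ₂ (g * gch p.2) (z p.2) := by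
        rw [act_mul_apply, hgch p.2, hp2, ← hz2]; exact hgch η
      have := coset (z p.2) (gch η) (g * gch p.2) h1
      rw [SimpleGraph.dist_comm]
      simpa [hψ, hz2] using this
    have hleg2 : K₁.dist (φ₁ (g * gch p.1) (xch (z p.1))) (φ₁ (g * gch p.2) (xch (z p.2)))
        = K₁.dist (ψ p.1) (ψ p.2) := by
      rw [act_mul_apply, act_mul_apply]
      exact act_dist_eq hK₁.acts hK₁.conn g _ _
    have htri : K₁.dist (ψ ξ) (ψ η) ≤
        K₁.dist (ψ ξ) (φ₁ (g * gch p.1) (xch (z p.1))) +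
        K₁.dist (φ₁ (g * gch p.1) (xch (z p.1))) (φ₁ (g * gch p.2) (xch (z p.2))) +
        K₁.dist (φ₁ (g * gch p.2) (xch (z p.2))) (ψ η) := by
      calc K₁.dist (ψ ξ) (ψ η) ≤ _ + K₁.dist (φ₁ (g * gch p.2) (xch (z p.2))) (ψ η) :=
            hK₁.conn.dist_triangle
        _ ≤ _ := by
            gcongr
            exact hK₁.conn.dist_triangle
    have hCp := hC _ ⟨p, hpF, rfl⟩
    simp only at hCp
    omega
  -- global Lipschitz bound
  have hwalk : ∀ {ξ η : V₂} (q : K₂.Walk ξ η), K₁.dist (ψ ξ) (ψ η) ≤ C * q.length := by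
    intro ξ η q
    induction q with
    | nil => simp [SimpleGraph.dist_self]
    | @cons a c b hadj q ih =>
      have h1 := hedge a c hadj
      have htri : K₁.dist (ψ a) (ψ b) ≤ K₁.dist (ψ a) (ψ c) + K₁.dist (ψ c) (ψ b) :=
        hK₁.conn.dist_triangle
      simp only [SimpleGraph.Walk.length_cons]
      calc K₁.dist (ψ a) (ψ b) ≤ K₁.dist (ψ a) (ψ c) + K₁.dist (ψ c) (ψ b) := htri
        _ ≤ C + C * q.length := by omega
        _ = C * (q.length + 1) := by ring
  refine ⟨ψ, C, ?_, ?_⟩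
  · intro ξ η
    obtain ⟨q, hq⟩ := hK₂.conn.exists_walk_length_eq_dist ξ η
    have := hwalk q
    rw [hq] at this
    exact this
  · intro ζ v
    refine ⟨Dch (z ζ) + K₁.dist (φ₁ (gch ζ) (xch (z ζ))) v, fun h => ?_⟩
    have hzh : z (φ₂ h ζ) = z ζ := hz_eq _ _ ⟨h, rfl⟩
    have hleg1 : K₁.dist (ψ (φ₂ h ζ)) (φ₁ (h * gch ζ) (xch (z ζ))) ≤ Dch (z ζ) := by
      have h1 : φ₂ (gch (φ₂ h ζ)) (z ζ) = φ₂ (h * gch ζ) (z ζ) := by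
        rw [← hzh, hgch (φ₂ h ζ), hzh, act_mul_apply, hgch ζ]
      have := coset (z ζ) (gch (φ₂ h ζ)) (h * gch ζ) h1
      simpa [hψ, hzh] using this
    have hleg2 : K₁.dist (φ₁ (h * gch ζ) (xch (z ζ))) (φ₁ h v)
        = K₁.dist (φ₁ (gch ζ) (xch (z ζ))) v := by
      rw [act_mul_apply]
      exact act_dist_eq hK₁.acts hK₁.conn h _ _
    have htri : K₁.dist (ψ (φ₂ h ζ)) (φ₁ h v) ≤
        K₁.dist (ψ (φ₂ h ζ)) (φ₁ (h * gch ζ) (xch (z ζ))) +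
        K₁.dist (φ₁ (h * gch ζ) (xch (z ζ))) (φ₁ h v) := hK₁.conn.dist_triangle
    omega


lemma subgraph_dist_ge {K : SimpleGraph V} (L : K.Subgraph) (hc : L.coe.Connected)
    (a b : L.verts) : K.dist a.1 b.1 ≤ L.coe.dist a b := by
  obtain ⟨p, hp⟩ := hc.exists_walk_length_eq_dist a b
  have := dist_le_of_walk_hom L.hom p
  rw [hp] at this; exact this

/-- Choice of a target vertex in `V₂` whose orbit under `H`-stabilizer of `r` is finite. -/
lemma exists_yy {V₁ : Type u} {V₂ : Type*} [Group G]
    (φ₁ : G →* Equiv.Perm V₁) (φ₂ : G →* Equiv.Perm V₂)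
    (Ps : Set (Subgroup G)) (K₁ : SimpleGraph V₁) (K₂ : SimpleGraph V₂)
    (hK₁ : IsGPGraph φ₁ Ps K₁) (hK₂ : IsGPGraph φ₂ Ps K₂)
    (H : Subgroup G) (r : V₁) :
    ∃ y : V₂, {ξ : V₂ | ∃ s : G, s ∈ H ∧ φ₁ s r = r ∧ φ₂ s y = ξ}.Finite := by
  classical
  by_cases hfin : ((stab φ₁ r : Set G)).Finite
  · obtain ⟨y⟩ := hK₂.conn.nonempty
    refine ⟨y, ((hfin.image (fun s => φ₂ s y)).subset ?_)⟩
    rintro ξ ⟨s, _, hs2, hs3⟩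
    exact ⟨s, hs2, hs3⟩
  · obtain ⟨P, hP, g, hg⟩ := hK₁.parab r hfin
    obtain ⟨yP, hyP⟩ := hK₂.reps P hP
    refine ⟨φ₂ g yP, (Set.finite_singleton (φ₂ g yP)).subset ?_⟩
    rintro ξ ⟨s, _, hs2, hs3⟩
    have hsmem : s ∈ conjSub g P := by rw [← hg]; exact hs2
    obtain ⟨q, hq, hqs⟩ := hsmem
    have hqy : φ₂ q yP = yP := by rw [← hyP] at hq; exact hq
    have : φ₂ s (φ₂ g yP) = φ₂ g yP := by
      have hqs' : (g * q * g⁻¹ : G) = s := hqs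
      rw [← hqs', ← act_mul_apply]
      rw [show g * q * g⁻¹ * g = g * q by group, act_mul_apply, hqy]
    simp [← hs3, this]
/-- Relative quasiconvexity (Definition Q-0) is independent of the choice of
`(G,Ps)`-graph. -/
theorem qc0_independent_of_graph {V₁ : Type u} {V₂ : Type*} [Group G]
    (φ₁ : G →* Equiv.Perm V₁) (φ₂ : G →* Equiv.Perm V₂)
    (Ps : Set (Subgroup G)) (K₁ : SimpleGraph V₁) (K₂ : SimpleGraph V₂)
    (hK₁ : IsGPGraph φ₁ Ps K₁) (hK₂ : IsGPGraph φ₂ Ps K₂)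
    (H : Subgroup G) (h₁ : QC0 φ₁ K₁ H) :
    QC0 φ₂ K₂ H := by
  classical
  obtain ⟨L1, ⟨x₀, hx₀⟩, hconn1, hinv1, ⟨F₁, hF₁fin, hF₁⟩, ⟨l₁, e₁, hl₁, he₁, hQI1⟩⟩ := h₁
  obtain ⟨ψ, C, hψlip, hψclose⟩ := exists_psi φ₁ φ₂ Ps K₁ K₂ hK₁ hK₂
  choose yy hSfin using exists_yy φ₁ φ₂ Ps K₁ K₂ hK₁ hK₂ H
  choose w2 hw2 using fun a b : V₂ => (hK₂.conn.preconnected a b).exists_walk_length_eq_dist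
  -- edge representatives for `L1`
  have husable : ∀ p : V₁ × V₁, ∃ h : G,
      (∃ k : G, k ∈ H ∧ L1.Adj (φ₁ k p.1) (φ₁ k p.2)) →
      (h ∈ H ∧ L1.Adj (φ₁ h p.1) (φ₁ h p.2)) := by
    intro p
    by_cases hu : ∃ k : G, k ∈ H ∧ L1.Adj (φ₁ k p.1) (φ₁ k p.2)
    · obtain ⟨k, hk⟩ := hu
      exact ⟨k, fun _ => hk⟩
    · exact ⟨1, fun h => absurd h hu⟩
  choose hc hcspec using husable
  set ap : V₁ × V₁ → V₁ := fun p => φ₁ (hc p) p.1 with hap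
  set bp : V₁ × V₁ → V₁ := fun p => φ₁ (hc p) p.2 with hbp
  set UP : Set (V₁ × V₁) :=
    {p | p ∈ F₁ ∧ ∃ k : G, k ∈ H ∧ L1.Adj (φ₁ k p.1) (φ₁ k p.2)} with hUP
  have hUPfin : UP.Finite := hF₁fin.subset (fun p hp => hp.1)
  have hUPadj : ∀ p ∈ UP, hc p ∈ H ∧ L1.Adj (ap p) (bp p) := fun p hp => hcspec p hp.2
  set R : Set V₁ := insert x₀ ((ap '' UP) ∪ (bp '' UP)) with hR
  have hRfin : R.Finite := (((hUPfin.image ap).union (hUPfin.image bp)).insert x₀)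
  have hx₀R : x₀ ∈ R := Set.mem_insert _ _
  have hRL : ∀ r ∈ R, r ∈ L1.verts := by
    intro r hr
    rcases hr with rfl | hr
    · exact hx₀
    rcases hr with ⟨p, hp, rfl⟩ | ⟨p, hp, rfl⟩
    · exact L1.edge_vert (hUPadj p hp).2
    · exact L1.edge_vert (hUPadj p hp).2.symm
  -- decomposition of `L1`-edges
  have hedgedec : ∀ u w : V₁, L1.Adj u w → ∃ g : G, g ∈ H ∧ ∃ p ∈ UP,
      φ₁ g (ap p) = u ∧ φ₁ g (bp p) = w := by
    intro u w hadj
    obtain ⟨g₀, hg₀H, p, hpF, h1, h2⟩ := hF₁ u w hadj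
    have hu : p ∈ UP := ⟨hpF, g₀, hg₀H, by rw [h1, h2]; exact hadj⟩
    obtain ⟨hcH, _⟩ := hUPadj p hu
    refine ⟨g₀ * (hc p)⁻¹, mul_mem hg₀H (inv_mem hcH), p, hu, ?_, ?_⟩
    · rw [hap]; simp only [← act_mul_apply]
      rw [show g₀ * (hc p)⁻¹ * hc p = g₀ by group]; exact h1
    · rw [hbp]; simp only [← act_mul_apply]
      rw [show g₀ * (hc p)⁻¹ * hc p = g₀ by group]; exact h2
  -- covering the vertices of `L1`
  have hcover : ∀ v ∈ L1.verts, ∃ h : G, h ∈ H ∧ ∃ r ∈ R, φ₁ h r = v := by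
    intro v hv
    by_cases hveq : v = x₀
    · exact ⟨1, one_mem H, x₀, hx₀R, by simp [hveq]⟩
    · obtain ⟨q⟩ := hconn1.preconnected ⟨v, hv⟩ ⟨x₀, hx₀⟩
      cases q with
      | nil => exact absurd rfl hveq
      | cons hadj q' =>
        have hadj' : L1.Adj v _ := hadj
        obtain ⟨g, hgH, p, hpUP, h1, _⟩ := hedgedec _ _ hadj'
        exact ⟨g, hgH, ap p, Set.mem_insert_of_mem _ (Or.inl ⟨p, hpUP, rfl⟩), h1⟩
  -- the orbit sets S r
  set S : V₁ → Set V₂ :=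
    fun r => {ξ | ∃ s : G, s ∈ H ∧ φ₁ s r = r ∧ φ₂ s (yy r) = ξ} with hS
  have hyyS : ∀ r : V₁, yy r ∈ S r := fun r => ⟨1, one_mem H, by simp, by simp⟩
  -- linking elements
  have hlinkch : ∀ q : V₁ × V₁, ∃ k : G,
      (∃ h : G, h ∈ H ∧ φ₁ h q.2 = q.1) → (k ∈ H ∧ φ₁ k q.2 = q.1) := by
    intro q
    by_cases hl : ∃ h : G, h ∈ H ∧ φ₁ h q.2 = q.1
    · obtain ⟨k, hk⟩ := hl; exact ⟨k, fun _ => hk⟩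
    · exact ⟨1, fun h => absurd h hl⟩
  choose lk lkspec using hlinkch
  -- the pieces
  set PIECE : V₂ → V₂ → Prop := fun st en =>
    (∃ r ∈ R, st = yy r ∧ en ∈ S r) ∨
    (∃ r ∈ R, ∃ r' ∈ R, (∃ h : G, h ∈ H ∧ φ₁ h r' = r) ∧ st = yy r ∧
      en = φ₂ (lk (r, r')) (yy r')) ∨
    (∃ p ∈ UP, st = yy (ap p) ∧ en = yy (bp p)) with hPIECE
  have hPIECESfin : {q : V₂ × V₂ | PIECE q.1 q.2}.Finite := by
    have h1 : {q : V₂ × V₂ | PIECE q.1 q.2} ⊆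
        (⋃ r ∈ R, (fun en => (yy r, en)) '' S r) ∪
        ((fun rr' : V₁ × V₁ => (yy rr'.1, φ₂ (lk rr') (yy rr'.2))) '' (R ×ˢ R)) ∪
        ((fun p => (yy (ap p), yy (bp p))) '' UP) := by
      rintro ⟨st, en⟩ hq
      rcases hq with ⟨r, hr, h1, h2⟩ | ⟨r, hr, r', hr', _, h1, h2⟩ | ⟨p, hp, h1, h2⟩
      · exact Or.inl (Or.inl (Set.mem_biUnion hr ⟨en, h2, Prod.ext h1.symm rfl⟩))
      · exact Or.inl (Or.inr ⟨(r, r'), ⟨hr, hr'⟩, Prod.ext h1.symm h2.symm⟩)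
      · exact Or.inr ⟨p, hp, Prod.ext h1.symm h2.symm⟩
    refine (Set.Finite.union (Set.Finite.union ?_ ?_) ?_).subset h1
    · exact Set.Finite.biUnion hRfin (fun r _ => (hSfin r).image _)
    · exact (hRfin.prod hRfin).image _
    · exact hUPfin.image _
  obtain ⟨M₁, hM₁⟩ : ∃ M₁ : ℕ, ∀ st en : V₂, PIECE st en → (w2 st en).length ≤ M₁ := by
    obtain ⟨B, hB⟩ := nat_bdd_of_finite
      (hPIECESfin.image (fun q : V₂ × V₂ => (w2 q.1 q.2).length))
    exact ⟨B, fun st en hp => hB _ ⟨(st, en), hp, rfl⟩⟩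
  -- the subgraph L₂
  set L₂ : K₂.Subgraph :=
    { verts := {ξ | ∃ h : G, h ∈ H ∧ ∃ q : V₂ × V₂, PIECE q.1 q.2 ∧
        φ₂ h⁻¹ ξ ∈ (w2 q.1 q.2).support}
      Adj := fun ξ η => ∃ h : G, h ∈ H ∧ ∃ q : V₂ × V₂, PIECE q.1 q.2 ∧
        s(φ₂ h⁻¹ ξ, φ₂ h⁻¹ η) ∈ (w2 q.1 q.2).edges
      adj_sub := by
        rintro ξ η ⟨h, hH, q, hq, he⟩
        have := (w2 q.1 q.2).adj_of_mem_edges he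
        have := hK₂.acts h _ _ this
        simpa [act_apply_inv] using this
      edge_vert := by
        rintro ξ η ⟨h, hH, q, hq, he⟩
        exact ⟨h, hH, q, hq, (w2 q.1 q.2).fst_mem_support_of_mem_edges he⟩
      symm := by
        refine ⟨?_⟩
        rintro ξ η ⟨h, hH, q, hq, he⟩
        exact ⟨h, hH, q, hq, by rwa [Sym2.eq_swap]⟩ } with hL₂
  -- membership facts
  have hmemW : ∀ h : G, h ∈ H → ∀ st en : V₂, PIECE st en →
      ∀ x ∈ (w2 st en).support, φ₂ h x ∈ L₂.verts := by
    intro h hH st en hp x hx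
    exact ⟨h, hH, (st, en), hp, by rwa [act_inv_apply]⟩
  have hmemYY : ∀ h : G, h ∈ H → ∀ r ∈ R, φ₂ h (yy r) ∈ L₂.verts := by
    intro h hH r hr
    exact hmemW h hH (yy r) (yy r) (Or.inl ⟨r, hr, rfl, hyyS r⟩) _
      (w2 (yy r) (yy r)).start_mem_support
  -- transferring pieces of chosen walks into L₂
  have hTRANS : ∀ (h : G), h ∈ H → ∀ (st en : V₂), PIECE st en →
      ∀ {a b : V₂} (q₀ : K₂.Walk a b), (∀ e ∈ q₀.edges, e ∈ (w2 st en).edges) →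
      ∀ (x y : V₂), x = φ₂ h a → y = φ₂ h b →
      ∀ (hxv : x ∈ L₂.verts) (hyv : y ∈ L₂.verts),
      ∃ q : L₂.coe.Walk ⟨x, hxv⟩ ⟨y, hyv⟩, q.length = q₀.length := by
    intro h hH st en hp a b q₀ hsub x y hx hy hxv hyv
    subst hx; subst hy
    have hedges : ∀ x' y' : V₂, s(x', y') ∈ (q₀.map (actHom hK₂.acts h)).edges →
        L₂.Adj x' y' := by
      intro x' y' hxy
      rw [SimpleGraph.Walk.edges_map] at hxy
      obtain ⟨e, he, hmap⟩ := List.mem_map.mp hxy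
      induction e using Sym2.ind with
      | _ c d =>
        rw [Sym2.map_pair_eq, Sym2.eq_iff] at hmap
        simp only [actHom_apply] at hmap
        have hcd : s(c, d) ∈ (w2 st en).edges := hsub _ he
        rcases hmap with ⟨h1, h2⟩ | ⟨h1, h2⟩
        · refine ⟨h, hH, (st, en), hp, ?_⟩
          have e1 : φ₂ h⁻¹ x' = c := by rw [← h1, act_inv_apply]
          have e2 : φ₂ h⁻¹ y' = d := by rw [← h2, act_inv_apply]
          rw [e1, e2]; exact hcd
        · refine ⟨h, hH, (st, en), hp, ?_⟩
          have e1 : φ₂ h⁻¹ x' = d := by rw [← h2, act_inv_apply]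
          have e2 : φ₂ h⁻¹ y' = c := by rw [← h1, act_inv_apply]
          rw [e1, e2, Sym2.eq_swap]; exact hcd
    obtain ⟨q, hq⟩ := walk_transfer_subgraph L₂ (q₀.map (actHom hK₂.acts h))
      hedges hxv hyv
    exact ⟨q, hq.trans (SimpleGraph.Walk.length_map _ _)⟩
  -- a full piece as a walk in L₂
  have hPW : ∀ (h : G), h ∈ H → ∀ (st en : V₂), PIECE st en →
      ∀ (x y : V₂), x = φ₂ h st → y = φ₂ h en →
      ∀ (hxv : x ∈ L₂.verts) (hyv : y ∈ L₂.verts),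
      ∃ q : L₂.coe.Walk ⟨x, hxv⟩ ⟨y, hyv⟩, q.length ≤ M₁ := by
    intro h hH st en hp x y hx hy hxv hyv
    obtain ⟨q, hq⟩ := hTRANS h hH st en hp (w2 st en) (fun e he => he) x y hx hy hxv hyv
    exact ⟨q, by rw [hq]; exact hM₁ st en hp⟩
  -- connecting two parametrizations of the same L1-vertex
  have hSAME : ∀ (h h' : G), h ∈ H → h' ∈ H → ∀ (r r' : V₁), r ∈ R → r' ∈ R →
      φ₁ h r = φ₁ h' r' →
      ∀ (hav : φ₂ h (yy r) ∈ L₂.verts) (hbv : φ₂ h' (yy r') ∈ L₂.verts),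
      ∃ q : L₂.coe.Walk ⟨φ₂ h (yy r), hav⟩ ⟨φ₂ h' (yy r'), hbv⟩,
        q.length ≤ 2 * M₁ := by
    intro h h' hH hH' r r' hr hr' heq hav hbv
    have hlink : ∃ k : G, k ∈ H ∧ φ₁ k r' = r :=
      ⟨h⁻¹ * h', mul_mem (inv_mem hH) hH', by
        rw [act_mul_apply, ← heq, act_inv_apply]⟩
    obtain ⟨hlkH, hlkeq⟩ := lkspec (r, r') hlink
    set t : G := h⁻¹ * h' * (lk (r, r'))⁻¹ with hts
    have htH : t ∈ H := mul_mem (mul_mem (inv_mem hH) hH') (inv_mem hlkH)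
    have hlkeq' : φ₁ (lk (r, r')) r' = r := hlkeq
    have hlkinv : φ₁ (lk (r, r'))⁻¹ r = r' := by
      have := act_inv_apply φ₁ (lk (r, r')) r'
      rwa [hlkeq'] at this
    have htstab : φ₁ t r = r := by
      rw [hts, act_mul_apply, act_mul_apply, hlkinv, ← heq, act_inv_apply]
    have piece1 : PIECE (yy r) (φ₂ t (yy r)) := Or.inl ⟨r, hr, rfl, ⟨t, htH, htstab, rfl⟩⟩
    have piece2 : PIECE (yy r) (φ₂ (lk (r, r')) (yy r')) :=
      Or.inr (Or.inl ⟨r, hr, r', hr', hlink, rfl, rfl⟩)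
    have hmidv : φ₂ (h * t) (yy r) ∈ L₂.verts := hmemYY (h * t) (mul_mem hH htH) r hr
    obtain ⟨q1, hq1⟩ := hPW h hH (yy r) (φ₂ t (yy r)) piece1 (φ₂ h (yy r))
      (φ₂ (h * t) (yy r)) rfl (by rw [act_mul_apply]) hav hmidv
    obtain ⟨q2, hq2⟩ := hPW (h * t) (mul_mem hH htH) (yy r) (φ₂ (lk (r, r')) (yy r'))
      piece2 (φ₂ (h * t) (yy r)) (φ₂ h' (yy r')) rfl
      (by rw [← act_mul_apply]; congr 1; rw [hts]; group) hmidv hbv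
    refine ⟨q1.append q2, ?_⟩
    rw [SimpleGraph.Walk.length_append]
    omega
  -- connecting across an edge of L1
  have hADJ : ∀ (v w : V₁), L1.Adj v w → ∀ (h h' : G), h ∈ H → h' ∈ H →
      ∀ (r r' : V₁), r ∈ R → r' ∈ R → φ₁ h r = v → φ₁ h' r' = w →
      ∀ (hav : φ₂ h (yy r) ∈ L₂.verts) (hbv : φ₂ h' (yy r') ∈ L₂.verts),
      ∃ q : L₂.coe.Walk ⟨φ₂ h (yy r), hav⟩ ⟨φ₂ h' (yy r'), hbv⟩,
        q.length ≤ 5 * M₁ := by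
    intro v w hadj h h' hH hH' r r' hr hr' hv hw hav hbv
    obtain ⟨g, hgH, p, hpUP, h1, h2⟩ := hedgedec v w hadj
    have hapR : ap p ∈ R := Set.mem_insert_of_mem _ (Or.inl ⟨p, hpUP, rfl⟩)
    have hbpR : bp p ∈ R := Set.mem_insert_of_mem _ (Or.inr ⟨p, hpUP, rfl⟩)
    have piece3 : PIECE (yy (ap p)) (yy (bp p)) := Or.inr (Or.inr ⟨p, hpUP, rfl, rfl⟩)
    have hm1 : φ₂ g (yy (ap p)) ∈ L₂.verts := hmemYY g hgH (ap p) hapR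
    have hm2 : φ₂ g (yy (bp p)) ∈ L₂.verts := hmemYY g hgH (bp p) hbpR
    obtain ⟨qa, hqa⟩ := hSAME h g hH hgH r (ap p) hr hapR (by rw [hv, h1]) hav hm1
    obtain ⟨qm, hqm⟩ := hPW g hgH (yy (ap p)) (yy (bp p)) piece3 _ _ rfl rfl hm1 hm2
    obtain ⟨qb, hqb⟩ := hSAME g h' hgH hH' (bp p) r' hbpR hr' (by rw [hw, h2]) hm2 hbv
    refine ⟨(qa.append qm).append qb, ?_⟩
    rw [SimpleGraph.Walk.length_append, SimpleGraph.Walk.length_append]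
    omega
  -- connecting along any walk of L1
  have hMAIN : ∀ (vv ww : L1.verts) (q1 : L1.coe.Walk vv ww) (h h' : G),
      h ∈ H → h' ∈ H → ∀ (r r' : V₁), r ∈ R → r' ∈ R →
      φ₁ h r = vv.1 → φ₁ h' r' = ww.1 →
      ∀ (hav : φ₂ h (yy r) ∈ L₂.verts) (hbv : φ₂ h' (yy r') ∈ L₂.verts),
      ∃ q : L₂.coe.Walk ⟨φ₂ h (yy r), hav⟩ ⟨φ₂ h' (yy r'), hbv⟩,
        q.length ≤ 5 * M₁ * q1.length + 2 * M₁ := by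
    intro vv ww q1
    induction q1 with
    | nil =>
      intro h h' hH hH' r r' hr hr' hv hw hav hbv
      obtain ⟨q, hq⟩ := hSAME h h' hH hH' r r' hr hr' (by rw [hv, hw]) hav hbv
      exact ⟨q, by simpa using hq⟩
    | @cons aa mid bb hadj q1' ih =>
      intro h h' hH hH' r r' hr hr' hv hw hav hbv
      obtain ⟨h₁, hh₁H, r₁, hr₁R, hr₁⟩ := hcover mid.1 mid.2
      have hm : φ₂ h₁ (yy r₁) ∈ L₂.verts := hmemYY h₁ hh₁H r₁ hr₁R
      have hadj' : L1.Adj aa.1 mid.1 := hadj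
      obtain ⟨qa, hqa⟩ := hADJ aa.1 mid.1 hadj' h h₁ hH hh₁H r r₁ hr hr₁R hv hr₁ hav hm
      obtain ⟨qb, hqb⟩ := ih h₁ h' hh₁H hH' r₁ r' hr₁R hr' hr₁ hw hm hbv
      refine ⟨qa.append qb, ?_⟩
      rw [SimpleGraph.Walk.length_append, SimpleGraph.Walk.length_cons]
      have hexp : 5 * M₁ * (q1'.length + 1) = 5 * M₁ * q1'.length + 5 * M₁ := by ring
      rw [hexp]
      omega
  -- every vertex of L₂ is close to a marked point
  have hSTRUCT : ∀ (ξ : V₂) (hξ : ξ ∈ L₂.verts), ∃ (h : G) (r : V₁),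
      h ∈ H ∧ r ∈ R ∧ ∃ (hv : φ₂ h (yy r) ∈ L₂.verts),
      (∃ q : L₂.coe.Walk ⟨ξ, hξ⟩ ⟨φ₂ h (yy r), hv⟩, q.length ≤ M₁) ∧
      K₂.dist ξ (φ₂ h (yy r)) ≤ M₁ := by
    intro ξ hξ
    obtain ⟨h₀, hH₀, ⟨st, en⟩, hp, hsupp⟩ := hξ
    have hstR : ∃ r ∈ R, st = yy r := by
      rcases hp with ⟨r, hr, h1, _⟩ | ⟨r, hr, _, _, _, h1, _⟩ | ⟨p, hpU, h1, _⟩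
      · exact ⟨r, hr, h1⟩
      · exact ⟨r, hr, h1⟩
      · exact ⟨ap p, Set.mem_insert_of_mem _ (Or.inl ⟨p, hpU, rfl⟩), h1⟩
    obtain ⟨r, hrR, hst⟩ := hstR
    set a : V₂ := φ₂ h₀⁻¹ ξ with ha
    set q₀ : K₂.Walk a st := ((w2 st en).takeUntil a hsupp).reverse with hq₀
    have hq₀len : q₀.length ≤ M₁ := by
      rw [hq₀, SimpleGraph.Walk.length_reverse]
      exact le_trans (SimpleGraph.Walk.length_takeUntil_le _ _) (hM₁ st en hp)
    have hq₀edges : ∀ e ∈ q₀.edges, e ∈ (w2 st en).edges := by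
      intro e he
      rw [hq₀, SimpleGraph.Walk.edges_reverse] at he
      exact SimpleGraph.Walk.edges_takeUntil_subset _ _ (List.mem_reverse.mp he)
    have hξeq : ξ = φ₂ h₀ a := (act_apply_inv φ₂ h₀ ξ).symm
    have hyv : φ₂ h₀ (yy r) ∈ L₂.verts := hmemYY h₀ hH₀ r hrR
    have hξv : ξ ∈ L₂.verts := ⟨h₀, hH₀, (st, en), hp, hsupp⟩
    obtain ⟨q, hqlen⟩ := hTRANS h₀ hH₀ st en hp q₀ hq₀edges ξ (φ₂ h₀ (yy r)) hξeq
      (by rw [hst]) hξv hyv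
    refine ⟨h₀, r, hH₀, hrR, hyv, ⟨q, by rw [hqlen]; exact hq₀len⟩, ?_⟩
    have hd := dist_le_of_walk_hom (actHom hK₂.acts h₀) q₀
    simp only [actHom_apply] at hd
    have hd' : K₂.dist (φ₂ h₀ a) (φ₂ h₀ st) ≤ M₁ := le_trans hd hq₀len
    rw [hξeq, ← hst]
    exact hd'
  -- nonemptiness and connectivity
  have hpt₀ : φ₂ (1 : G) (yy x₀) ∈ L₂.verts := hmemYY 1 (one_mem H) x₀ hx₀R
  have hvrt : ∀ (h : G), h ∈ H → ∀ r ∈ R, φ₁ h r ∈ L1.verts :=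
    fun h hH r hr => (hinv1 h hH).1 r (hRL r hr)
  have hL₂conn : L₂.coe.Connected := by
    refine { preconnected := ?_, nonempty := ⟨⟨_, hpt₀⟩⟩ }
    rintro ⟨ξ, hξ⟩ ⟨η, hη⟩
    obtain ⟨hA, rA, hAH, hrA, hvA, ⟨qA, _⟩, _⟩ := hSTRUCT ξ hξ
    obtain ⟨hB, rB, hBH, hrB, hvB, ⟨qB, _⟩, _⟩ := hSTRUCT η hη
    have hv : φ₁ hA rA ∈ L1.verts := hvrt hA hAH rA hrA
    have hw : φ₁ hB rB ∈ L1.verts := hvrt hB hBH rB hrB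
    obtain ⟨q1, _⟩ := hconn1.exists_walk_length_eq_dist ⟨_, hv⟩ ⟨_, hw⟩
    obtain ⟨qM, _⟩ := hMAIN ⟨_, hv⟩ ⟨_, hw⟩ q1 hA hB hAH hBH rA rB hrA hrB rfl rfl hvA hvB
    exact ⟨(qA.append qM).append qB.reverse⟩
  -- constants for the closeness of ψ on marked points
  choose Cc hCc using fun r : V₁ => hψclose (yy r) r
  obtain ⟨C', hC'⟩ : ∃ C' : ℕ, ∀ r ∈ R, Cc r ≤ C' := by
    obtain ⟨B, hB⟩ := nat_bdd_of_finite (hRfin.image Cc)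
    exact ⟨B, fun r hr => hB _ ⟨r, hr, rfl⟩⟩
  refine ⟨L₂, ⟨_, hpt₀⟩, hL₂conn, ?_, ?_, ?_⟩
  · -- H-invariance
    intro g hg
    constructor
    · rintro ξ ⟨h, hH, q, hq, hsupp⟩
      refine ⟨g * h, mul_mem hg hH, q, hq, ?_⟩
      have hrw : φ₂ (g * h)⁻¹ (φ₂ g ξ) = φ₂ h⁻¹ ξ := by
        rw [mul_inv_rev, act_mul_apply, act_inv_apply]
      rwa [hrw]
    · rintro u w ⟨h, hH, q, hq, he⟩
      refine ⟨g * h, mul_mem hg hH, q, hq, ?_⟩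
      have hrw1 : φ₂ (g * h)⁻¹ (φ₂ g u) = φ₂ h⁻¹ u := by
        rw [mul_inv_rev, act_mul_apply, act_inv_apply]
      have hrw2 : φ₂ (g * h)⁻¹ (φ₂ g w) = φ₂ h⁻¹ w := by
        rw [mul_inv_rev, act_mul_apply, act_inv_apply]
      rwa [hrw1, hrw2]
  · -- finitely many H-orbits of edges
    refine ⟨{q : V₂ × V₂ | ∃ st en : V₂, PIECE st en ∧ s(q.1, q.2) ∈ (w2 st en).edges},
      ?_, ?_⟩
    · have hsub : {q : V₂ × V₂ | ∃ st en, PIECE st en ∧ s(q.1, q.2) ∈ (w2 st en).edges} ⊆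
          ⋃ pc ∈ {q : V₂ × V₂ | PIECE q.1 q.2},
            {x | x ∈ (w2 pc.1 pc.2).support} ×ˢ {x | x ∈ (w2 pc.1 pc.2).support} := by
        rintro ⟨u, w⟩ ⟨st, en, hp, he⟩
        refine Set.mem_biUnion (show ((st, en) : V₂ × V₂) ∈
          {q : V₂ × V₂ | PIECE q.1 q.2} from hp) ?_
        exact ⟨SimpleGraph.Walk.fst_mem_support_of_mem_edges (w2 st en) he,
          SimpleGraph.Walk.snd_mem_support_of_mem_edges (w2 st en) he⟩
      exact (Set.Finite.biUnion hPIECESfin (fun pc _ =>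
        ((w2 pc.1 pc.2).support.finite_toSet).prod
          ((w2 pc.1 pc.2).support.finite_toSet))).subset hsub
    · rintro u w ⟨h, hH, ⟨st, en⟩, hp, he⟩
      exact ⟨h, hH, (φ₂ h⁻¹ u, φ₂ h⁻¹ w), ⟨st, en, hp, he⟩,
        act_apply_inv φ₂ h u, act_apply_inv φ₂ h w⟩
  · -- quasi-isometric embedding
    refine ⟨5 * (M₁ : ℝ) * l₁ * (C : ℝ) + 1,
      4 * (M₁ : ℝ) + 5 * (M₁ : ℝ) * (l₁ * (2 * (C' : ℝ) + 2 * (C : ℝ) * (M₁ : ℝ)) + e₁),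
      ?_, ?_, ?_⟩
    · have h1 : (0 : ℝ) ≤ (M₁ : ℝ) := Nat.cast_nonneg _
      have h2 : (0 : ℝ) ≤ (C : ℝ) := Nat.cast_nonneg _
      have hl₁0 : (0 : ℝ) ≤ l₁ := le_trans zero_le_one hl₁
      have : (0 : ℝ) ≤ 5 * (M₁ : ℝ) * l₁ * (C : ℝ) :=
        mul_nonneg (mul_nonneg (mul_nonneg (by norm_num) h1) hl₁0) h2
      linarith
    · have h1 : (0 : ℝ) ≤ (M₁ : ℝ) := Nat.cast_nonneg _
      have h2 : (0 : ℝ) ≤ (C : ℝ) := Nat.cast_nonneg _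
      have h3 : (0 : ℝ) ≤ (C' : ℝ) := Nat.cast_nonneg _
      have hl₁0 : (0 : ℝ) ≤ l₁ := le_trans zero_le_one hl₁
      have h4 : (0 : ℝ) ≤ l₁ * (2 * (C' : ℝ) + 2 * (C : ℝ) * (M₁ : ℝ)) + e₁ :=
        add_nonneg (mul_nonneg hl₁0 (by positivity)) he₁
      have h5 : (0 : ℝ) ≤ 5 * (M₁ : ℝ) *
          (l₁ * (2 * (C' : ℝ) + 2 * (C : ℝ) * (M₁ : ℝ)) + e₁) :=
        mul_nonneg (by positivity) h4
      linarith
    · intro u w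
      obtain ⟨hA, rA, hAH, hrA, hvA, ⟨qA, hqAlen⟩, hdA⟩ := hSTRUCT u.1 u.2
      obtain ⟨hB, rB, hBH, hrB, hvB, ⟨qB, hqBlen⟩, hdB⟩ := hSTRUCT w.1 w.2
      have hv : φ₁ hA rA ∈ L1.verts := hvrt hA hAH rA hrA
      have hw : φ₁ hB rB ∈ L1.verts := hvrt hB hBH rB hrB
      have d1 : L₂.coe.dist u ⟨φ₂ hA (yy rA), hvA⟩ ≤ M₁ :=
        le_trans (SimpleGraph.dist_le qA) hqAlen
      have d2 : L₂.coe.dist w ⟨φ₂ hB (yy rB), hvB⟩ ≤ M₁ :=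
        le_trans (SimpleGraph.dist_le qB) hqBlen
      obtain ⟨q1, hq1len⟩ := hconn1.exists_walk_length_eq_dist ⟨_, hv⟩ ⟨_, hw⟩
      obtain ⟨qM, hqM⟩ := hMAIN ⟨_, hv⟩ ⟨_, hw⟩ q1 hA hB hAH hBH rA rB hrA hrB
        rfl rfl hvA hvB
      have dM : L₂.coe.dist ⟨φ₂ hA (yy rA), hvA⟩ ⟨φ₂ hB (yy rB), hvB⟩ ≤
          5 * M₁ * (L1.coe.dist ⟨_, hv⟩ ⟨_, hw⟩) + 2 * M₁ := by
        refine le_trans (SimpleGraph.dist_le qM) ?_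
        rw [← hq1len]
        exact hqM
      have hdl2N : L₂.coe.dist u w ≤ 4 * M₁ + 5 * M₁ * (L1.coe.dist ⟨_, hv⟩ ⟨_, hw⟩) := by
        have t1 : L₂.coe.dist u w ≤ L₂.coe.dist u ⟨φ₂ hA (yy rA), hvA⟩ +
            L₂.coe.dist ⟨φ₂ hA (yy rA), hvA⟩ w := hL₂conn.dist_triangle
        have t2 : L₂.coe.dist ⟨φ₂ hA (yy rA), hvA⟩ w ≤
            L₂.coe.dist ⟨φ₂ hA (yy rA), hvA⟩ ⟨φ₂ hB (yy rB), hvB⟩ +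
            L₂.coe.dist ⟨φ₂ hB (yy rB), hvB⟩ w := hL₂conn.dist_triangle
        have t3 : L₂.coe.dist ⟨φ₂ hB (yy rB), hvB⟩ w = L₂.coe.dist w ⟨φ₂ hB (yy rB), hvB⟩ :=
          SimpleGraph.dist_comm
        omega
      -- K₁-distance bound
      have hK1 : K₁.dist (φ₁ hA rA) (φ₁ hB rB) ≤
          C' + C * K₂.dist (φ₂ hA (yy rA)) (φ₂ hB (yy rB)) + C' := by
        have t1 : K₁.dist (φ₁ hA rA) (φ₁ hB rB) ≤
            K₁.dist (φ₁ hA rA) (ψ (φ₂ hA (yy rA))) +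
            K₁.dist (ψ (φ₂ hA (yy rA))) (φ₁ hB rB) := hK₁.conn.dist_triangle
        have t2 : K₁.dist (ψ (φ₂ hA (yy rA))) (φ₁ hB rB) ≤
            K₁.dist (ψ (φ₂ hA (yy rA))) (ψ (φ₂ hB (yy rB))) +
            K₁.dist (ψ (φ₂ hB (yy rB))) (φ₁ hB rB) := hK₁.conn.dist_triangle
        have c1 : K₁.dist (φ₁ hA rA) (ψ (φ₂ hA (yy rA))) ≤ C' := by
          rw [SimpleGraph.dist_comm]
          exact le_trans (hCc rA hA) (hC' rA hrA)
        have c2 : K₁.dist (ψ (φ₂ hB (yy rB))) (φ₁ hB rB) ≤ C' :=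
          le_trans (hCc rB hB) (hC' rB hrB)
        have cmid : K₁.dist (ψ (φ₂ hA (yy rA))) (ψ (φ₂ hB (yy rB))) ≤
            C * K₂.dist (φ₂ hA (yy rA)) (φ₂ hB (yy rB)) := hψlip _ _
        omega
      have hK2tri : K₂.dist (φ₂ hA (yy rA)) (φ₂ hB (yy rB)) ≤
          M₁ + K₂.dist u.1 w.1 + M₁ := by
        have t1 : K₂.dist (φ₂ hA (yy rA)) (φ₂ hB (yy rB)) ≤
            K₂.dist (φ₂ hA (yy rA)) u.1 + K₂.dist u.1 (φ₂ hB (yy rB)) :=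
          hK₂.conn.dist_triangle
        have t2 : K₂.dist u.1 (φ₂ hB (yy rB)) ≤
            K₂.dist u.1 w.1 + K₂.dist w.1 (φ₂ hB (yy rB)) := hK₂.conn.dist_triangle
        have t3 : K₂.dist (φ₂ hA (yy rA)) u.1 = K₂.dist u.1 (φ₂ hA (yy rA)) :=
          SimpleGraph.dist_comm
        omega
      -- the QI for L1
      have hQIn : ((L1.coe.dist ⟨_, hv⟩ ⟨_, hw⟩ : ℕ) : ℝ) ≤
          l₁ * (K₁.dist (φ₁ hA rA) (φ₁ hB rB) : ℝ) + e₁ :=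
        (hQI1 ⟨_, hv⟩ ⟨_, hw⟩).2
      have hlow : K₂.dist u.1 w.1 ≤ L₂.coe.dist u w := subgraph_dist_ge L₂ hL₂conn u w
      -- real number juggling
      have hM0 : (0 : ℝ) ≤ (M₁ : ℝ) := Nat.cast_nonneg _
      have hC0 : (0 : ℝ) ≤ (C : ℝ) := Nat.cast_nonneg _
      have hC'0 : (0 : ℝ) ≤ (C' : ℝ) := Nat.cast_nonneg _
      have hl₁0 : (0 : ℝ) ≤ l₁ := le_trans zero_le_one hl₁
      have hdk0 : (0 : ℝ) ≤ (K₂.dist u.1 w.1 : ℝ) := Nat.cast_nonneg _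
      have hdl0 : (0 : ℝ) ≤ (L₂.coe.dist u w : ℝ) := Nat.cast_nonneg _
      have hlowR : (K₂.dist u.1 w.1 : ℝ) ≤ (L₂.coe.dist u w : ℝ) := by
        exact_mod_cast hlow
      have hdl2R : (L₂.coe.dist u w : ℝ) ≤ 4 * (M₁ : ℝ) + 5 * (M₁ : ℝ) *
          ((L1.coe.dist ⟨_, hv⟩ ⟨_, hw⟩ : ℕ) : ℝ) := by
        exact_mod_cast hdl2N
      have hK1R : (K₁.dist (φ₁ hA rA) (φ₁ hB rB) : ℝ) ≤
          (C' : ℝ) + (C : ℝ) * ((M₁ : ℝ) + (K₂.dist u.1 w.1 : ℝ) + (M₁ : ℝ)) + (C' : ℝ) := by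
        have : K₁.dist (φ₁ hA rA) (φ₁ hB rB) ≤
            C' + C * (M₁ + K₂.dist u.1 w.1 + M₁) + C' := by
          have := Nat.mul_le_mul_left C hK2tri
          omega
        exact_mod_cast this
      have h5M0 : (0 : ℝ) ≤ 5 * (M₁ : ℝ) := by positivity
      have hprod0 : (0 : ℝ) ≤ 5 * (M₁ : ℝ) * l₁ * (C : ℝ) :=
        mul_nonneg (mul_nonneg h5M0 hl₁0) hC0
      have he0 : (0 : ℝ) ≤ 4 * (M₁ : ℝ) + 5 * (M₁ : ℝ) *
          (l₁ * (2 * (C' : ℝ) + 2 * (C : ℝ) * (M₁ : ℝ)) + e₁) := by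
        have := add_nonneg (mul_nonneg hl₁0 (by positivity :
          (0:ℝ) ≤ 2 * (C' : ℝ) + 2 * (C : ℝ) * (M₁ : ℝ))) he₁
        have := mul_nonneg h5M0 this
        linarith [mul_nonneg (by norm_num : (0:ℝ) ≤ (4:ℝ)) hM0]
      constructor
      · have hexp : (5 * (M₁ : ℝ) * l₁ * (C : ℝ) + 1) * (L₂.coe.dist u w : ℝ) =
            5 * (M₁ : ℝ) * l₁ * (C : ℝ) * (L₂.coe.dist u w : ℝ) +
            (L₂.coe.dist u w : ℝ) := by ring
        rw [hexp]
        have := mul_nonneg hprod0 hdl0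
        linarith
      · have key : (L₂.coe.dist u w : ℝ) ≤
            4 * (M₁ : ℝ) + 5 * (M₁ : ℝ) *
              (l₁ * ((C' : ℝ) + (C : ℝ) * ((M₁ : ℝ) + (K₂.dist u.1 w.1 : ℝ) + (M₁ : ℝ)) + (C' : ℝ)) + e₁) := by
          refine le_trans hdl2R ?_
          have step1 : ((L1.coe.dist ⟨_, hv⟩ ⟨_, hw⟩ : ℕ) : ℝ) ≤
              l₁ * ((C' : ℝ) + (C : ℝ) * ((M₁ : ℝ) + (K₂.dist u.1 w.1 : ℝ) + (M₁ : ℝ)) + (C' : ℝ)) + e₁ := by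
            refine le_trans hQIn ?_
            have := mul_le_mul_of_nonneg_left hK1R hl₁0
            linarith
          have := mul_le_mul_of_nonneg_left step1 h5M0
          linarith
        have hring : 4 * (M₁ : ℝ) + 5 * (M₁ : ℝ) *
            (l₁ * ((C' : ℝ) + (C : ℝ) * ((M₁ : ℝ) + (K₂.dist u.1 w.1 : ℝ) + (M₁ : ℝ)) + (C' : ℝ)) + e₁) =
            5 * (M₁ : ℝ) * l₁ * (C : ℝ) * (K₂.dist u.1 w.1 : ℝ) +
            (4 * (M₁ : ℝ) + 5 * (M₁ : ℝ) *
              (l₁ * (2 * (C' : ℝ) + 2 * (C : ℝ) * (M₁ : ℝ)) + e₁)) := by ring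
        have hexp : (5 * (M₁ : ℝ) * l₁ * (C : ℝ) + 1) * (K₂.dist u.1 w.1 : ℝ) =
            5 * (M₁ : ℝ) * l₁ * (C : ℝ) * (K₂.dist u.1 w.1 : ℝ) +
            (K₂.dist u.1 w.1 : ℝ) := by ring
        rw [hexp]
        rw [hring] at key
        linarith
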